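/- Let β ∈ ℝ^D and â ∈ ℝ^N be unit vectors and s > 0. Suppose a(t) = u(t) â and W(t) = u(t) â βᵀ evolve under the two-layer gradient flow da/dt = W(sβ − Wᵀa), dW/dt = a(sβ − Wᵀa)ᵀ (whitened data, Σ = I) with u(0) = u₀ > 0. Then u satisfies u' = u(s − u²), and c(t) := u(t)² satisfies the logistic equation c' = 2c(s − c), whose solution is c(t) = s e^{2st} / (e^{2st} − 1 + s/c₀) with c₀ = u₀²; in particular c(t) → s as t → ∞. -/

import Mathlib

open Matrix Filter Set
open scoped Matrix.Norms.L2Operator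

/-- The Euclidean (ℓ²) norm of a vector in `ℝ^n`. -/
noncomputable def euclNorm {n : ℕ} (v : Fin n → ℝ) : ℝ :=
  Real.sqrt (∑ i, v i ^ 2)

/-- In Phase II of a two-layer linear network with whitened data (`Σ = I`),
if `a(t) = u(t) â` and `W(t) = u(t) â βᵀ` (with `â, β` unit vectors) evolve under the
gradient flow `da/dt = W(sβ − Wᵀa)`, `dW/dt = a(sβ − Wᵀa)ᵀ`, with `u(0) = u₀ > 0`, then `u`
satisfies `u' = u(s − u²)`, `c := u²` satisfies the logistic equation `c' = 2c(s − c)` whose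
solution is `c(t) = s e^{2st}/(e^{2st} − 1 + s/c₀)` with `c₀ = u₀²`, and `c(t) → s`. -/
theorem stmt12 {N D : ℕ} (β : Fin D → ℝ) (hβ : euclNorm β = 1)
    (ahat : Fin N → ℝ) (hahat : euclNorm ahat = 1)
    (s : ℝ) (hs : 0 < s)
    (u : ℝ → ℝ) (u₀ : ℝ) (hu0 : u 0 = u₀) (hu₀pos : 0 < u₀)
    (a : ℝ → Fin N → ℝ) (W : ℝ → Matrix (Fin N) (Fin D) ℝ)
    (ha : ∀ t, a t = u t • ahat)
    (hW : ∀ t, W t = u t • vecMulVec ahat β)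
    (hflowa : ∀ t ≥ (0 : ℝ), HasDerivAt a (W t *ᵥ (s • β - (W t)ᵀ *ᵥ a t)) t)
    (hflowW : ∀ t ≥ (0 : ℝ), HasDerivAt W (vecMulVec (a t) (s • β - (W t)ᵀ *ᵥ a t)) t) :
    (∀ t ≥ (0 : ℝ), HasDerivAt u (u t * (s - u t ^ 2)) t) ∧
    (∀ t ≥ (0 : ℝ), HasDerivAt (fun t => u t ^ 2) (2 * u t ^ 2 * (s - u t ^ 2)) t) ∧
    (∀ t ≥ (0 : ℝ), u t ^ 2 =
      s * Real.exp (2 * s * t) / (Real.exp (2 * s * t) - 1 + s / u₀ ^ 2)) ∧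
    Tendsto (fun t => u t ^ 2) atTop (nhds s) := by
  -- squared norms
  have hβ2 : ∑ j, β j ^ 2 = 1 := by
    have h0 : (0:ℝ) ≤ ∑ j, β j ^ 2 := by positivity
    unfold euclNorm at hβ
    nlinarith [Real.sq_sqrt h0]
  have hahat2 : ∑ i, ahat i ^ 2 = 1 := by
    have h0 : (0:ℝ) ≤ ∑ i, ahat i ^ 2 := by positivity
    unfold euclNorm at hahat
    nlinarith [Real.sq_sqrt h0]
  obtain ⟨i0, hi0⟩ : ∃ i, ahat i ≠ 0 := by
    by_contra hc
    push_neg at hc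
    have : ∑ i, ahat i ^ 2 = 0 :=
      Finset.sum_eq_zero fun i _ => by rw [hc i]; ring
    rw [this] at hahat2; norm_num at hahat2
  -- the scalar ODE
  have hu' : ∀ t ≥ (0:ℝ), HasDerivAt u (u t * (s - u t ^ 2)) t := by
    intro t ht
    have h1 := hflowa t ht
    have h2 : (W t *ᵥ (s • β - (W t)ᵀ *ᵥ a t)) = (u t * (s - u t ^ 2)) • ahat := by
      rw [hW, ha]
      funext i
      simp only [mulVec, dotProduct, Pi.smul_apply, smul_eq_mul, Pi.sub_apply,
        transpose_apply, vecMulVec_apply, Matrix.smul_apply]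
      have inner : ∀ j, ∑ i', u t * (ahat i' * β j) * (u t * ahat i') = u t ^ 2 * β j := by
        intro j
        have : ∑ i', u t * (ahat i' * β j) * (u t * ahat i')
            = (u t ^ 2 * β j) * ∑ i', ahat i' ^ 2 := by
          rw [Finset.mul_sum]; exact Finset.sum_congr rfl fun i' _ => by ring
        rw [this, hahat2, mul_one]
      have step : ∀ j, u t * (ahat i * β j) * (s * β j - ∑ i', u t * (ahat i' * β j) * (u t * ahat i'))
          = (u t * ahat i * (s - u t ^ 2)) * β j ^ 2 := by
        intro j; rw [inner j]; ring
      calc ∑ j, u t * (ahat i * β j) * (s * β j - ∑ i', u t * (ahat i' * β j) * (u t * ahat i'))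
          = ∑ j, (u t * ahat i * (s - u t ^ 2)) * β j ^ 2 :=
            Finset.sum_congr rfl fun j _ => step j
        _ = (u t * ahat i * (s - u t ^ 2)) * ∑ j, β j ^ 2 := by rw [Finset.mul_sum]
        _ = u t * (s - u t ^ 2) * ahat i := by rw [hβ2]; ring
    rw [h2] at h1
    have h3 := (hasDerivAt_pi.mp h1) i0
    have h4 : (fun t => a t i0) = fun t => u t * ahat i0 := by
      funext t'; rw [ha t']; simp
    rw [h4] at h3
    simp only [Pi.smul_apply, smul_eq_mul] at h3
    have h5 := h3.mul_const (ahat i0)⁻¹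
    have h6 : (fun t => u t * ahat i0 * (ahat i0)⁻¹) = u := by
      funext t'; field_simp
    rw [h6] at h5
    convert h5 using 1
    any_goals rfl
    field_simp
  -- the logistic ODE for c = u²
  have hc' : ∀ t ≥ (0:ℝ), HasDerivAt (fun t => u t ^ 2) (2 * u t ^ 2 * (s - u t ^ 2)) t := by
    intro t ht
    have := (hu' t ht).pow 2
    convert this using 1
    any_goals rfl
    ring
  -- the explicit solution
  set k : ℝ := s / u₀ ^ 2 with hk
  have hkpos : 0 < k := by positivity
  set g : ℝ → ℝ := fun t => s * Real.exp (2 * s * t) / (Real.exp (2 * s * t) - 1 + k)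
    with hgdef
  have hD : ∀ t ≥ (0:ℝ), 0 < Real.exp (2 * s * t) - 1 + k := by
    intro t ht
    have : (1:ℝ) ≤ Real.exp (2 * s * t) := Real.one_le_exp (by positivity)
    linarith
  have hE : ∀ t : ℝ, HasDerivAt (fun t => Real.exp (2 * s * t))
      (2 * s * Real.exp (2 * s * t)) t := by
    intro t
    have h1 : HasDerivAt (fun x : ℝ => 2 * s * x) (2 * s) t := by
      simpa using (hasDerivAt_id t).const_mul (2 * s)
    simpa [mul_comm] using h1.exp
  have hg' : ∀ t ≥ (0:ℝ), HasDerivAt g (2 * g t * (s - g t)) t := by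
    intro t ht
    have hnum : HasDerivAt (fun t => s * Real.exp (2 * s * t))
        (s * (2 * s * Real.exp (2 * s * t))) t := (hE t).const_mul s
    have hden : HasDerivAt (fun t => Real.exp (2 * s * t) - 1 + k)
        (2 * s * Real.exp (2 * s * t)) t := by
      simpa using ((hE t).sub_const 1).add_const k
    have hDne : Real.exp (2 * s * t) - 1 + k ≠ 0 := (hD t ht).ne'
    have h := hnum.div hden hDne
    convert h using 1
    any_goals rfl
    rw [hgdef]
    field_simp
  -- c = g on [0, ∞) via Grönwall
  have heq : ∀ t ≥ (0:ℝ), u t ^ 2 = g t := by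
    intro T hT
    set f : ℝ → ℝ := fun t => u t ^ 2 - g t with hfdef
    have hfc : ContinuousOn f (Icc 0 T) := fun t ht =>
      (((hc' t ht.1).sub (hg' t ht.1)).continuousAt).continuousWithinAt
    have hφc : ContinuousOn (fun t => 2 * s - 2 * (u t ^ 2 + g t)) (Icc 0 T) := by
      apply ContinuousOn.sub continuousOn_const
      apply ContinuousOn.mul continuousOn_const
      exact fun t ht => (((hc' t ht.1).continuousAt).add
        ((hg' t ht.1).continuousAt)).continuousWithinAt
    obtain ⟨C, hC⟩ := isCompact_Icc.exists_bound_of_continuousOn hφc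
    have hderiv : ∀ t ∈ Ico (0:ℝ) T,
        HasDerivWithinAt f ((2 * s - 2 * (u t ^ 2 + g t)) * f t) (Ici t) t := by
      intro t ht
      have h := ((hc' t ht.1).sub (hg' t ht.1)).hasDerivWithinAt (s := Ici t)
      convert h using 1
      any_goals rfl
      rw [hfdef]
      ring
    have hf0 : ‖f 0‖ ≤ 0 := by
      have hg0 : g 0 = u₀ ^ 2 := by
        rw [hgdef]; simp only [mul_zero, Real.exp_zero, hk]
        field_simp
        ring
      rw [hfdef]
      simp [hg0, hu0]
    have hbound : ∀ t ∈ Ico (0:ℝ) T,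
        ‖(2 * s - 2 * (u t ^ 2 + g t)) * f t‖ ≤ C * ‖f t‖ + 0 := by
      intro t ht
      rw [norm_mul, add_zero]
      exact mul_le_mul_of_nonneg_right (hC t ⟨ht.1, ht.2.le⟩) (norm_nonneg _)
    have key := norm_le_gronwallBound_of_norm_deriv_right_le hfc hderiv hf0 hbound
      T ⟨hT, le_refl T⟩
    rw [gronwallBound_ε0] at key
    simp only [Real.norm_eq_abs] at key
    have hfT : f T = 0 := abs_nonpos_iff.mp (by simpa using key)
    exact sub_eq_zero.mp hfT
  refine ⟨hu', hc', heq, ?_⟩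
  -- the limit
  have hEtop : Tendsto (fun t => Real.exp (2 * s * t)) atTop atTop :=
    Real.tendsto_exp_atTop.comp (tendsto_id.const_mul_atTop (by positivity))
  have hinv : Tendsto (fun t => (Real.exp (2 * s * t))⁻¹) atTop (nhds 0) :=
    hEtop.inv_tendsto_atTop
  have hden : Tendsto (fun t => 1 + (k - 1) * (Real.exp (2 * s * t))⁻¹) atTop (nhds 1) := by
    have := (tendsto_const_nhds (x := k - 1) (f := atTop)).mul hinv
    simpa using tendsto_const_nhds.add this
  have hlim : Tendsto (fun t => s / (1 + (k - 1) * (Real.exp (2 * s * t))⁻¹))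
      atTop (nhds s) := by
    have := (tendsto_const_nhds (x := s) (f := atTop)).div hden one_ne_zero
    simpa [Pi.div_def] using this
  apply hlim.congr'
  filter_upwards [eventually_ge_atTop (0:ℝ)] with t ht
  rw [heq t ht, hgdef]
  have hEne : Real.exp (2 * s * t) ≠ 0 := (Real.exp_pos _).ne'
  have h1 : 1 + (k - 1) * (Real.exp (2 * s * t))⁻¹
      = (Real.exp (2 * s * t) - 1 + k) / Real.exp (2 * s * t) := by
    field_simp
    ring
  rw [h1, div_div_eq_mul_div]
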